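/- arXiv:1704.04544 — 4 statements merged into one kernel-verified Lean document; each statement's English description precedes it below -/
import Mathlib

section
/- Let D0, D1 be division rings over a field k and let M be a k-central D0–D1-bimodule with left dimension n and right dimension m where m ≥ 2. Let {φ_1,…,φ_m} be a right basis of M over D1 and {φ_1*,…,φ_m*} the corresponding left dual basis of the right dual M* = Hom_{D1}(M, D1). If v ∈ M and g ∈ M* are such that v ⊗ g lies in the D0-subbimodule of M ⊗_{D1} M* generated by the canonical element Σ_l φ_l ⊗ φ_l*, then v = 0 or g = 0. -/
/-!
STATEMENT 0.  `D0`, `D1` are division rings over a field `k`, and `M` is a `k`-central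
`D0`–`D1`-bimodule (left `D0`-module, right `D1`-module — encoded as a `D1ᵐᵒᵖ`-module —
with commuting actions agreeing on `k`), of left dimension `n` and right dimension `m ≥ 2`.
A right basis `φ = (φ_1, …, φ_m)` of `M` over `D1` is given; the corresponding left dual
basis of the right dual `M* = Hom_{D1}(M, D1) = (M →ₗ[D1ᵐᵒᵖ] D1)` consists of the coordinate
functionals `φ_l* = x ↦ (φ.coord l x).unop`.

Under the standard identification of `M ⊗_{D1} M*` with `(M*)^m` sending a pure tensor
`v ⊗ g` to the tuple of functionals `(coord_p(v) · g)_p` (where `(d·g)(x) = d * g(x)`),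
the hypothesis "`v ⊗ g` lies in the `D0`-subbimodule of `M ⊗_{D1} M*` generated by the
canonical element `Σ_l φ_l ⊗ φ_l*`" reads: there is `c ∈ D0` such that for all `p`,
`coord_p(v) · g = Σ_l coord_p(c • φ_l) · φ_l*` (as functionals on `M`).
The conclusion is `v = 0` or `g = 0`.
-/

theorem statement0
    (k : Type*) [Field k]
    (D0 D1 : Type*) [DivisionRing D0] [DivisionRing D1]
    [Algebra k D0] [Algebra k D1]
    (M : Type*) [AddCommGroup M] [Module D0 M] [Module D1ᵐᵒᵖ M]
    [SMulCommClass D0 D1ᵐᵒᵖ M]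
    -- `M` is `k`-central: the two induced `k`-actions coincide
    (hcentral : ∀ (α : k) (x : M),
      (algebraMap k D0 α) • x = (MulOpposite.op (algebraMap k D1 α)) • x)
    -- left dimension `n`, right dimension `m ≥ 2`
    (n : ℕ) [FiniteDimensional D0 M] (hn : Module.finrank D0 M = n)
    (m : ℕ) (hm : 2 ≤ m)
    (φ : Module.Basis (Fin m) D1ᵐᵒᵖ M)
    (v : M) (g : M →ₗ[D1ᵐᵒᵖ] D1)
    -- `v ⊗ g` lies in the `D0`-subbimodule generated by `Σ_l φ_l ⊗ φ_l*`,
    -- i.e. `v ⊗ g = c • (Σ_l φ_l ⊗ φ_l*)` for some `c ∈ D0`, written in coordinates: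
    (h : ∃ c : D0, ∀ (p : Fin m) (x : M),
      (φ.coord p v).unop * g x
        = ∑ l : Fin m, (φ.coord p (c • φ l)).unop * (φ.coord l x).unop) :
    v = 0 ∨ g = 0 := by
  by_contra hvg
  push_neg at hvg
  obtain ⟨hv, hg⟩ := hvg
  obtain ⟨c, h⟩ := h
  -- Key: `c • φ q = op (g (φ q)) • v` for every `q`.
  have key : ∀ q : Fin m, c • φ q = MulOpposite.op (g (φ q)) • v := by
    intro q
    apply φ.ext_elem
    intro p
    have h1 := h p (φ q)
    have h2 : ∑ l : Fin m, (φ.coord p (c • φ l)).unop * (φ.coord l (φ q)).unop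
        = (φ.coord p (c • φ q)).unop := by
      rw [Finset.sum_eq_single q]
      · simp [Module.Basis.coord_apply, Module.Basis.repr_self]
      · intro l _ hl
        simp [Module.Basis.coord_apply, Module.Basis.repr_self_apply, Ne.symm hl]
      · simp
    rw [h2] at h1
    simp only [map_smul, Finsupp.smul_apply, smul_eq_mul]
    apply MulOpposite.unop_injective
    simpa [Module.Basis.coord_apply] using h1.symm
  -- there is a basis vector on which `g` is nonzero
  have hq1 : ∃ q : Fin m, g (φ q) ≠ 0 := by
    by_contra hq
    push_neg at hq
    exact hg (φ.ext hq)
  obtain ⟨q1, hgq1⟩ := hq1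
  by_cases hc : c = 0
  · -- then `op (g (φ q1)) • v = 0`, so `v = 0`
    have := key q1
    rw [hc, zero_smul] at this
    have hv0 : v = 0 := by
      have := (smul_eq_zero.mp this.symm).resolve_left ?_
      · exact this
      · simpa using hgq1
    exact hv hv0
  · have : Nontrivial (Fin m) := by
      refine ⟨⟨0, by omega⟩, ⟨1, by omega⟩, ?_⟩
      simp [Fin.ext_iff]
    obtain ⟨q2, hq2⟩ := exists_ne q1
    set s : D1ᵐᵒᵖ := MulOpposite.op ((g (φ q1))⁻¹ * g (φ q2)) with hs
    have hchain : c • φ q2 = c • (s • φ q1) := by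
      rw [smul_comm, key q1, key q2, smul_smul, hs]
      congr 1
      apply MulOpposite.unop_injective
      simp only [MulOpposite.unop_mul, MulOpposite.unop_op]
      rw [← mul_assoc, mul_inv_cancel₀ hgq1, one_mul]
    have hinj : Function.Injective (fun x : M => c • x) :=
      smul_right_injective M hc
    have heq : φ q2 = s • φ q1 := hinj hchain
    have := congrArg (fun x => φ.repr x q2) heq
    simp [Module.Basis.repr_self, Module.Basis.repr_self_apply, Ne.symm hq2] at this
end

section
/- Let (L_i) be a sequence in a k-linear abelian category satisfying: each End(L_i) is a division ring; Hom(L_i, L_{i-1}) = 0 = Ext^1(L_i, L_{i-1}); and for each i there is a short exact sequence 0 → L_i → L_{i+1}^{l_i} → L_{i+2} → 0 (the Euler sequences), with l_i = dim_{D_{i+1}} Hom(L_i, L_{i+1}) finite. Then Hom(L_i, L_j) = 0 for all j < i. -/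
/-!
STATEMENT 15.  Let `(L i)_{i ∈ ℤ}` be a sequence of objects in a `k`-linear abelian category
satisfying: each `End (L i)` is a division ring; `Hom(L i, L (i-1)) = 0` and
`Ext^1(L i, L (i-1)) = 0` (the latter expressed by the splitting of every short exact
sequence `0 → L (i-1) → E → L i → 0`); and for each `i` there is a short exact (Euler)
sequence `0 → L i → (L (i+1))^{l i} → L (i+2) → 0`, where
`l i = dim_{D (i+1)} Hom(L i, L (i+1))` is finite.  Then `Hom(L i, L j) = 0` for all `j < i`.
-/

open CategoryTheory CategoryTheory.Limits

attribute [local instance] CategoryTheory.Limits.HasFiniteBiproducts.of_hasFiniteProducts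

theorem statement15
    (k : Type*) [Field k]
    (C : Type*) [Category C] [Abelian C] [Linear k C]
    (L : ℤ → C)
    -- each `End (L i)` is a division ring
    (hdiv : ∀ i (f : End (L i)), f ≠ 0 → IsUnit f)
    -- `Hom(L i, L (i-1)) = 0`
    (hhom : ∀ i (f : L i ⟶ L (i - 1)), f = 0)
    -- `Ext^1(L i, L (i-1)) = 0`: every extension of `L i` by `L (i-1)` splits
    (hext : ∀ i (E : C) (u : L (i - 1) ⟶ E) (v : E ⟶ L i) (w : u ≫ v = 0),
      Mono u → Epi v → (ShortComplex.mk u v w).Exact →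
      ∃ s : L i ⟶ E, s ≫ v = 𝟙 (L i))
    -- `l i` is the (finite) left dimension of `Hom(L i, L (i+1))` over `D (i+1)`
    (l : ℤ → ℕ)
    (hfin : ∀ i, Module.Finite (End (L (i + 1))) (L i ⟶ L (i + 1)))
    (hl : ∀ i, l i = Module.finrank (End (L (i + 1))) (L i ⟶ L (i + 1)))
    -- the Euler short exact sequences `0 → L i → (L (i+1))^{l i} → L (i+2) → 0`
    (u : ∀ i, L i ⟶ ⨁ fun (_ : Fin (l i)) => L (i + 1))
    (v : ∀ i, (⨁ fun (_ : Fin (l i)) => L (i + 1)) ⟶ L (i + 2))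
    (hw : ∀ i, u i ≫ v i = 0)
    (hmono : ∀ i, Mono (u i)) (hepi : ∀ i, Epi (v i))
    (hexact : ∀ i, (ShortComplex.mk (u i) (v i) (hw i)).Exact) :
    ∀ i j : ℤ, j < i → ∀ f : L i ⟶ L j, f = 0 := by
  suffices h : ∀ n : ℕ, ∀ i j : ℤ, i - j = (n : ℤ) + 1 → ∀ f : L i ⟶ L j, f = 0 by
    intro i j hij f
    obtain ⟨n, hn⟩ : ∃ n : ℕ, i - j = (n : ℤ) + 1 := ⟨(i - j - 1).toNat, by omega⟩
    exact h n i j hn f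
  intro n
  induction n with
  | zero =>
    intro i j hij f
    have hj : j = i - 1 := by omega
    subst hj
    exact hhom i f
  | succ n ih =>
    intro i j hij f
    obtain ⟨m, rfl⟩ : ∃ m, i = m + 2 := ⟨i - 2, by ring⟩
    have hvf : v m ≫ f = 0 := by
      apply biproduct.hom_ext'
      intro b
      rw [comp_zero, ← Category.assoc]
      exact ih (m + 1) j (by omega) _
    have := hepi m
    rw [← cancel_epi (v m), hvf, comp_zero]
end

section
/- With the same hypotheses as the previous statement, the dimensions l_i = dim_{D_{i+1}} Hom(L_i, L_{i+1}) (left) and r_i = dim_{D_i} Hom(L_i, L_{i+1}) (right) are nonzero for all i. -/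
/-!
STATEMENT 16.  With the same hypotheses as Statement 15 (a sequence `(L i)` in a `k`-linear
abelian category with `End (L i)` division rings, `Hom(L i, L (i-1)) = 0 = Ext^1(L i, L (i-1))`,
and Euler short exact sequences `0 → L i → (L (i+1))^{l i} → L (i+2) → 0`), the dimensions
`l i = dim_{D (i+1)} Hom(L i, L (i+1))` (left) and `r i = dim_{D i} Hom(L i, L (i+1))`
(right, i.e. over `(End (L i))ᵐᵒᵖ`, acting by precomposition) are nonzero for all `i`.
-/

open CategoryTheory CategoryTheory.Limits

attribute [local instance] CategoryTheory.Limits.HasFiniteBiproducts.of_hasFiniteProducts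

/-- The right `End X`-module structure (i.e. left `(End X)ᵐᵒᵖ`-module structure) on
`X ⟶ Y`, given by precomposition. -/
instance endMopModule {C : Type*} [Category C] [Preadditive C] (X Y : C) :
    Module (End X)ᵐᵒᵖ (X ⟶ Y) where
  smul a f := a.unop ≫ f
  one_smul f := Category.id_comp f
  mul_smul a b f := by
    show ((a * b).unop) ≫ f = a.unop ≫ (b.unop ≫ f)
    rw [← Category.assoc]
    rfl
  smul_zero a := Limits.comp_zero
  smul_add a f g := Preadditive.comp_add _ _ _ _ _ _
  add_smul a b f := Preadditive.add_comp _ _ _ _ _ _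
  zero_smul f := Limits.zero_comp

lemma aux_subsingleton_of_finrank_zero {R M : Type*} [Ring R] [Nontrivial R]
    [AddCommGroup M] [Module R M] [Module.Finite R M]
    (hu : ∀ f : R, f ≠ 0 → IsUnit f) (h : Module.finrank R M = 0) :
    Subsingleton M := by
  letI : DivisionRing R := DivisionRing.ofIsUnitOrEqZero
    (fun a => or_iff_not_imp_right.mpr (hu a))
  exact Module.finrank_zero_iff.mp h

lemma aux_finrank_one_of_subsingleton {R M : Type*} [Ring R] [Subsingleton R]
    [AddCommGroup M] [Module R M] : Module.finrank R M = 1 := by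
  rw [Module.finrank, rank_subsingleton]
  simp

theorem statement16
    (k : Type*) [Field k]
    (C : Type*) [Category C] [Abelian C] [Linear k C]
    (L : ℤ → C)
    (hdiv : ∀ i (f : End (L i)), f ≠ 0 → IsUnit f)
    (hhom : ∀ i (f : L i ⟶ L (i - 1)), f = 0)
    (hext : ∀ i (E : C) (u : L (i - 1) ⟶ E) (v : E ⟶ L i) (w : u ≫ v = 0),
      Mono u → Epi v → (ShortComplex.mk u v w).Exact →
      ∃ s : L i ⟶ E, s ≫ v = 𝟙 (L i))
    (l : ℤ → ℕ)
    (hfinl : ∀ i, Module.Finite (End (L (i + 1))) (L i ⟶ L (i + 1)))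
    (hfinr : ∀ i, Module.Finite (End (L i))ᵐᵒᵖ (L i ⟶ L (i + 1)))
    (hl : ∀ i, l i = Module.finrank (End (L (i + 1))) (L i ⟶ L (i + 1)))
    (u : ∀ i, L i ⟶ ⨁ fun (_ : Fin (l i)) => L (i + 1))
    (v : ∀ i, (⨁ fun (_ : Fin (l i)) => L (i + 1)) ⟶ L (i + 2))
    (hw : ∀ i, u i ≫ v i = 0)
    (hmono : ∀ i, Mono (u i)) (hepi : ∀ i, Epi (v i))
    (hexact : ∀ i, (ShortComplex.mk (u i) (v i) (hw i)).Exact) :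
    ∀ i : ℤ, l i ≠ 0 ∧ Module.finrank (End (L i))ᵐᵒᵖ (L i ⟶ L (i + 1)) ≠ 0 := by
  -- If `X` is a zero object then `End X` is a subsingleton.
  have hzero_end : ∀ (X : C), IsZero X → Subsingleton (End X) := fun X h =>
    ⟨fun f g => h.eq_of_src f g⟩
  -- If `L (j+1)` is zero then so is `L j`, by the mono `u j` into a biproduct of zeros.
  have hB : ∀ j : ℤ, IsZero (L (j + 1)) → IsZero (L j) := by
    intro j hz
    have hbz : IsZero (⨁ fun (_ : Fin (l j)) => L (j + 1)) := by
      rw [IsZero.iff_id_eq_zero]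
      apply biproduct.hom_ext
      intro b
      exact hz.eq_of_tgt _ _
    have hu0 : u j = 0 := hbz.eq_of_tgt _ _
    rw [IsZero.iff_id_eq_zero]
    haveI := hmono j
    rw [← cancel_mono (u j)]
    simp [hu0]
  intro i
  have hli : l i ≠ 0 := by
    intro h0
    have hbz : IsZero (⨁ fun (_ : Fin (l i)) => L (i + 1)) := by
      rw [IsZero.iff_id_eq_zero]
      apply biproduct.hom_ext
      intro b
      exact absurd b.2 (by omega)
    have hv0 : v i = 0 := hbz.eq_of_src _ _
    have hz2 : IsZero (L (i + 2)) := by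
      rw [IsZero.iff_id_eq_zero]
      haveI := hepi i
      rw [← cancel_epi (v i)]
      simp [hv0]
    have hz2' : IsZero (L ((i + 1) + 1)) := by rwa [show i + 1 + 1 = i + 2 by ring]
    have hz1 : IsZero (L (i + 1)) := hB (i + 1) hz2'
    haveI := hzero_end _ hz1
    have hone := hl i
    rw [aux_finrank_one_of_subsingleton] at hone
    omega
  refine ⟨hli, ?_⟩
  by_cases hs : Subsingleton (End (L i))
  · haveI := hs
    rw [aux_finrank_one_of_subsingleton]
    exact one_ne_zero
  · haveI : Nontrivial (End (L i)) := not_subsingleton_iff_nontrivial.mp hs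
    intro h0
    haveI := hfinr i
    have hsub : Subsingleton (L i ⟶ L (i + 1)) := by
      refine aux_subsingleton_of_finrank_zero (fun f hf => ?_) h0
      have hunop : f.unop ≠ 0 := by
        intro h
        exact hf (by rw [← f.op_unop, h]; rfl)
      simpa using (hdiv i f.unop hunop).op
    have hu0 : u i = 0 := by
      apply biproduct.hom_ext
      intro b
      exact Subsingleton.elim _ _
    have hid : 𝟙 (L i) = 0 := by
      haveI := hmono i
      rw [← cancel_mono (u i)]
      simp [hu0]
    exact hs ⟨fun f g => by
      rw [show f = 𝟙 (L i) ≫ f from (Category.id_comp f).symm,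
        show g = 𝟙 (L i) ≫ g from (Category.id_comp g).symm, hid, Limits.zero_comp,
        Limits.zero_comp]⟩
end

section
/- Let (L_i) be a linear sequence (satisfying properties (1)–(5): End(L_i) = D_i division rings over k; Hom(L_i,L_{i-1}) = 0 = Ext^1(L_i,L_{i-1}); Hom(L_i,L_{i+1}) finite-dimensional on both sides; Euler exact sequences 0 → L_i → *Hom(L_i,L_{i+1}) ⊗_{D_{i+1}} L_{i+1} → L_{i+2} → 0; the induced maps Φ_i: D_i → D_{i+2} are isomorphisms). Then for each i, applying Hom(L_{i+1}, −) to the i-th Euler sequence yields a bimodule isomorphism Ψ_i: *Hom(L_i, L_{i+1}) → Hom(L_{i+1}, L_{i+2}), where the D_i–D_{i+1}-structure on the target is via Φ_i. -/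
/-!
STATEMENT 17.  Let `(L i)_{i ∈ ℤ}` be a *linear* sequence in a `k`-linear abelian category,
i.e. (1) each `D i := End (L i)` is a division ring; (2) `Hom(L i, L (i-1)) = 0 =
Ext^1(L i, L (i-1))` (extensions split); (3) each `Hom(L i, L (i+1))` is finite-dimensional
on both sides; (4) there are Euler short exact sequences
`0 → L i → *Hom(L i, L (i+1)) ⊗_{D (i+1)} L (i+1) → L (i+2) → 0`, whose middle term is
presented as `(L (i+1))^{l i}` with the `l i` components `h_p = u_i ≫ π_p` of the left-hand
map left linearly independent over `D (i+1)` (hence a left basis, as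
`l i = dim_{D (i+1)} Hom(L i, L (i+1))`); (5) the canonical maps `Φ_i : D i → D (i+2)` are
isomorphisms.  Then for each `i`, applying `Hom(L (i+1), −)` to the `i`-th Euler sequence
yields an isomorphism of `D i`–`D (i+1)`-bimodules
`Ψ_i : *Hom(L i, L (i+1)) → Hom(L (i+1), L (i+2))`,
`Ψ_i(ξ) = biproduct.lift (ξ(h_p))_p ≫ v_i`: it is additive, bijective, right
`D (i+1)`-equivariant (`Ψ(ξ·b) = b ≫ Ψ(ξ)`, with `(ξ·b)(h) = ξ(h)·b`), and left
`D i`-equivariant via a ring homomorphism `Φ : D i → D (i+2)`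
(`Ψ(c·ξ) = Ψ(ξ) ≫ Φ(c)`, with `(c·ξ)(h) = ξ(h·c)`).
-/

open CategoryTheory CategoryTheory.Limits

attribute [local instance] CategoryTheory.Limits.HasFiniteBiproducts.of_hasFiniteProducts

/-- Precomposition by `c ∈ End X`, as an `End Y`-linear endomap of `X ⟶ Y`
(the right `End X`-action on `Hom(X, Y)`). -/
def precompL {C : Type*} [Category C] [Preadditive C] {X Y : C} (c : End X) :
    (X ⟶ Y) →ₗ[End Y] (X ⟶ Y) where
  toFun h := (c : X ⟶ X) ≫ h
  map_add' h h' := Preadditive.comp_add _ _ _ _ _ _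
  map_smul' d h := by
    show c ≫ (h ≫ d) = (c ≫ h) ≫ d
    rw [Category.assoc]

/-- The map `Ψ : *Hom(X, Y) → Hom(Y, Z)` obtained by applying `Hom(Y, −)` to an Euler
sequence `0 → X --u--> Y^n --v--> Z → 0`: `Ψ(ξ)` has components `ξ(u ≫ π_p)`. -/
noncomputable def eulerPsi {C : Type*} [Category C] [Abelian C] {X Y Z : C} {n : ℕ}
    (u : X ⟶ ⨁ fun (_ : Fin n) => Y) (v : (⨁ fun (_ : Fin n) => Y) ⟶ Z)
    (ξ : (X ⟶ Y) →ₗ[End Y] End Y) : Y ⟶ Z :=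
  biproduct.lift (fun p => (ξ (u ≫ biproduct.π (fun (_ : Fin n) => Y) p) : Y ⟶ Y)) ≫ v

/-- Surjectivity of `Hom(Y, v)` for a short exact sequence `0 → X → B → Z → 0`,
given that all extensions of `Y` by `X` split. -/
lemma surj_of_split {C : Type*} [Category C] [Abelian C] {X B Z Y : C}
    (u : X ⟶ B) (v : B ⟶ Z) (w : u ≫ v = 0)
    [Mono u] [Epi v] (hex : (ShortComplex.mk u v w).Exact)
    (hsplit : ∀ (E : C) (f : X ⟶ E) (g : E ⟶ Y) (w : f ≫ g = 0),
      Mono f → Epi g → (ShortComplex.mk f g w).Exact → ∃ s : Y ⟶ E, s ≫ g = 𝟙 Y)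
    (g : Y ⟶ Z) : ∃ t : Y ⟶ B, t ≫ v = g := by
  let P := pullback v g
  let fst : P ⟶ B := pullback.fst v g
  let snd : P ⟶ Y := pullback.snd v g
  haveI : Epi snd := inferInstanceAs (Epi (pullback.snd v g))
  let f0 : X ⟶ P := pullback.lift u 0 (by simp [w])
  have hf0fst : f0 ≫ fst = u := pullback.lift_fst _ _ _
  have hf0snd : f0 ≫ snd = 0 := pullback.lift_snd _ _ _
  haveI : Mono f0 := mono_of_mono_fac hf0fst
  have hker : IsLimit (KernelFork.ofι u w) := hex.fIsKernel
  have hexP : (ShortComplex.mk f0 snd hf0snd).Exact := by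
    apply ShortComplex.exact_of_f_is_kernel
    refine KernelFork.IsLimit.ofι' f0 hf0snd (fun {A} t ht => ?_)
    obtain ⟨l, hl⟩ := KernelFork.IsLimit.lift' hker (t ≫ fst) (by
      rw [Category.assoc, pullback.condition, ← Category.assoc, ht, zero_comp])
    refine ⟨l, ?_⟩
    apply pullback.hom_ext
    · rw [Category.assoc]
      exact (congrArg (fun m => l ≫ m) hf0fst).trans (by simpa using hl)
    · rw [Category.assoc]
      exact (congrArg (fun m => l ≫ m) hf0snd).trans (by simp only [comp_zero]; exact ht.symm)
  obtain ⟨s, hs⟩ := hsplit P f0 snd hf0snd inferInstance inferInstance hexP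
  exact ⟨s ≫ fst, by rw [Category.assoc, pullback.condition, ← Category.assoc, hs,
    Category.id_comp]⟩

theorem statement17
    (k : Type*) [Field k]
    (C : Type*) [Category C] [Abelian C] [Linear k C]
    (L : ℤ → C)
    -- (1) each `End (L i)` is a division ring
    (hdiv : ∀ i (f : End (L i)), f ≠ 0 → IsUnit f)
    -- (2) `Hom(L i, L (i-1)) = 0 = Ext^1(L i, L (i-1))`
    (hhom : ∀ i (f : L i ⟶ L (i - 1)), f = 0)
    (hext : ∀ i (E : C) (f : L (i - 1) ⟶ E) (g : E ⟶ L i) (w : f ≫ g = 0),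
      Mono f → Epi g → (ShortComplex.mk f g w).Exact →
      ∃ s : L i ⟶ E, s ≫ g = 𝟙 (L i))
    -- (3) `Hom(L i, L (i+1))` finite-dimensional on both sides
    (hfinl : ∀ i, Module.Finite (End (L (i + 1))) (L i ⟶ L (i + 1)))
    (hfinr : ∀ i, Module.Finite (End (L i))ᵐᵒᵖ (L i ⟶ L (i + 1)))
    (l : ℤ → ℕ)
    (hl : ∀ i, l i = Module.finrank (End (L (i + 1))) (L i ⟶ L (i + 1)))
    -- (4) the Euler short exact sequences, with left linearly independent components
    (u : ∀ i, L i ⟶ ⨁ fun (_ : Fin (l i)) => L (i + 1))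
    (v : ∀ i, (⨁ fun (_ : Fin (l i)) => L (i + 1)) ⟶ L (i + 2))
    (hw : ∀ i, u i ≫ v i = 0)
    (hmono : ∀ i, Mono (u i)) (hepi : ∀ i, Epi (v i))
    (hexact : ∀ i, (ShortComplex.mk (u i) (v i) (hw i)).Exact)
    (hindep : ∀ i, LinearIndependent (End (L (i + 1)))
      (fun p : Fin (l i) => u i ≫ biproduct.π (fun _ => L (i + 1)) p))
    -- (5) the canonical maps `Φ_i : D i → D (i+2)` are isomorphisms
    (hPhi : ∀ i, ∃ Φ : End (L i) ≃+* End (L (i + 2)),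
      ∀ a : End (L i), ∃ fa : (⨁ fun (_ : Fin (l i)) => L (i + 1)) ⟶
          (⨁ fun (_ : Fin (l i)) => L (i + 1)),
        (a : L i ⟶ L i) ≫ u i = u i ≫ fa ∧
        fa ≫ v i = v i ≫ (Φ a : L (i + 2) ⟶ L (i + 2))) :
    ∀ i : ℤ,
      (∀ ξ ζ, eulerPsi (u i) (v i) (ξ + ζ)
        = eulerPsi (u i) (v i) ξ + eulerPsi (u i) (v i) ζ) ∧
      Function.Bijective (eulerPsi (u i) (v i)) ∧
      (∀ (b : End (L (i + 1))) ξ,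
        eulerPsi (u i) (v i)
            ((LinearMap.toSpanSingleton (End (L (i + 1))) (End (L (i + 1))) b).comp ξ)
          = (b : L (i + 1) ⟶ L (i + 1)) ≫ eulerPsi (u i) (v i) ξ) ∧
      (∃ Φ : End (L i) →+* End (L (i + 2)), ∀ (c : End (L i)) ξ,
        eulerPsi (u i) (v i) (ξ.comp (precompL c))
          = eulerPsi (u i) (v i) ξ ≫ (Φ c : L (i + 2) ⟶ L (i + 2))) := by
  intro i
  haveI := hmono i
  haveI := hepi i
  -- Hom(L (i+1), L i) = 0
  have homYX : ∀ (f : L (i + 1) ⟶ L i), f = 0 := by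
    intro f
    have hcast : L i = L (i + 1 - 1) := congrArg L (by omega)
    have h0 := hhom (i + 1) (f ≫ eqToHom hcast)
    have : f = (f ≫ eqToHom hcast) ≫ eqToHom hcast.symm := by simp
    rw [this, h0, zero_comp]
  -- splitting for extensions of L (i+1) by L i
  have hsplit' : ∀ (E : C) (f : L i ⟶ E) (g : E ⟶ L (i + 1)) (w' : f ≫ g = 0),
      Mono f → Epi g → (ShortComplex.mk f g w').Exact →
      ∃ s : L (i + 1) ⟶ E, s ≫ g = 𝟙 (L (i + 1)) := by
    intro E f g w' hm he hx
    have hcast : L (i + 1 - 1) = L i := congrArg L (by omega)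
    have w'' : (eqToHom hcast ≫ f) ≫ g = 0 := by rw [Category.assoc, w', comp_zero]
    refine hext (i + 1) E (eqToHom hcast ≫ f) g w'' inferInstance he ?_
    have e : (ShortComplex.mk f g w') ≅ (ShortComplex.mk (eqToHom hcast ≫ f) g w'') :=
      ShortComplex.isoMk (eqToIso hcast.symm) (Iso.refl _) (Iso.refl _)
        (by simp) (by simp)
    exact (ShortComplex.exact_iff_of_iso e).mp hx
  have psi_def : ∀ ξ, eulerPsi (u i) (v i) ξ =
      biproduct.lift (fun p => (ξ (u i ≫ biproduct.π (fun _ => L (i + 1)) p) : _)) ≫ v i :=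
    fun _ => rfl
  -- additivity
  have hadd : ∀ ξ ζ, eulerPsi (u i) (v i) (ξ + ζ)
      = eulerPsi (u i) (v i) ξ + eulerPsi (u i) (v i) ζ := by
    intro ξ ζ
    rw [psi_def, psi_def, psi_def, ← Preadditive.add_comp]
    congr 1
    apply biproduct.hom_ext
    intro p
    simp [Preadditive.add_comp]
  have hsub : ∀ ξ ζ, eulerPsi (u i) (v i) (ξ - ζ)
      = eulerPsi (u i) (v i) ξ - eulerPsi (u i) (v i) ζ := by
    intro ξ ζ
    rw [psi_def, psi_def, psi_def, ← Preadditive.sub_comp]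
    congr 1
    apply biproduct.hom_ext
    intro p
    simp [Preadditive.sub_comp]
  -- injectivity
  have hzero : ∀ ξ, eulerPsi (u i) (v i) ξ = 0 → ξ = 0 := by
    intro ξ hξ
    have hlift : biproduct.lift
        (fun p => (ξ (u i ≫ biproduct.π (fun _ => L (i + 1)) p) : _)) = 0 := by
      obtain ⟨w', hw'⟩ := KernelFork.IsLimit.lift' (hexact i).fIsKernel _ hξ
      rw [homYX w', zero_comp] at hw'
      exact hw'.symm
    have hcomp : ∀ p, ξ (u i ≫ biproduct.π (fun _ => L (i + 1)) p) = 0 := by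
      intro p
      have := congrArg (fun m => m ≫ biproduct.π (fun _ => L (i + 1)) p) hlift
      simpa using this
    apply LinearMap.ext
    intro x
    show ξ x = 0
    rcases subsingleton_or_nontrivial (End (L (i + 1))) with hns | hns
    · have hid : (𝟙 (L (i + 1)) : End (L (i + 1))) = 0 := hns.elim _ _
      have hx0 : x = 0 := by
        rw [← Category.comp_id x]
        rw [show (𝟙 (L (i + 1)) : L (i + 1) ⟶ L (i + 1)) = 0 from hid, comp_zero]
      rw [hx0, map_zero]
    · letI : DivisionRing (End (L (i + 1))) := DivisionRing.ofIsUnitOrEqZero (fun a => by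
        by_cases h : a = 0
        · exact Or.inr h
        · exact Or.inl (hdiv _ a h))
      haveI : FiniteDimensional (End (L (i + 1))) (L i ⟶ L (i + 1)) := hfinl i
      have hsp : Submodule.span (End (L (i + 1))) (Set.range
          (fun p : Fin (l i) => u i ≫ biproduct.π (fun _ => L (i + 1)) p)) = ⊤ :=
        (hindep i).span_eq_top_of_card_eq_finrank'
          ((Fintype.card_fin _).trans (hl i))
      have hx : x ∈ Submodule.span (End (L (i + 1))) (Set.range
          (fun p : Fin (l i) => u i ≫ biproduct.π (fun _ => L (i + 1)) p)) :=
        hsp ▸ Submodule.mem_top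
      refine Submodule.span_induction ?_ ?_ ?_ ?_ hx
      · rintro _ ⟨p, rfl⟩; exact hcomp p
      · exact map_zero ξ
      · intro a b _ _ ha hb
        rw [map_add, ha, hb, add_zero]
      · intro d a _ ha
        rw [map_smul, ha, smul_zero]
  -- surjectivity
  have hsurj : Function.Surjective (eulerPsi (u i) (v i)) := by
    intro g
    obtain ⟨t, ht⟩ := surj_of_split (u i) (v i) (hw i) (hexact i) hsplit' g
    rcases subsingleton_or_nontrivial (End (L (i + 1))) with hns | hns
    · have hid : (𝟙 (L (i + 1)) : End (L (i + 1))) = 0 := hns.elim _ _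
      refine ⟨0, ?_⟩
      have ht0 : t = 0 := by
        rw [← Category.id_comp t,
          show (𝟙 (L (i + 1)) : L (i + 1) ⟶ L (i + 1)) = 0 from hid, zero_comp]
      rw [psi_def, ← ht, ht0, zero_comp]
      have : biproduct.lift (fun p =>
          (((0 : (L i ⟶ L (i + 1)) →ₗ[End (L (i+1))] End (L (i+1)))
            (u i ≫ biproduct.π (fun _ => L (i + 1)) p)) : L (i+1) ⟶ L (i+1))) =
          (0 : L (i+1) ⟶ ⨁ fun (_ : Fin (l i)) => L (i+1)) := by
        apply biproduct.hom_ext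
        intro p
        simp
      rw [this]
      exact Limits.zero_comp
    · letI : DivisionRing (End (L (i + 1))) := DivisionRing.ofIsUnitOrEqZero (fun a => by
        by_cases h : a = 0
        · exact Or.inr h
        · exact Or.inl (hdiv _ a h))
      haveI : FiniteDimensional (End (L (i + 1))) (L i ⟶ L (i + 1)) := hfinl i
      let b : Module.Basis (Fin (l i)) (End (L (i + 1))) (L i ⟶ L (i + 1)) :=
        Module.Basis.mk (hindep i)
          ((hindep i).span_eq_top_of_card_eq_finrank'
            ((Fintype.card_fin _).trans (hl i))).ge
      refine ⟨b.constr ℕ (fun p => (t ≫ biproduct.π (fun _ => L (i + 1)) p :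
        End (L (i + 1)))), ?_⟩
      rw [psi_def, ← ht]
      congr 1
      apply biproduct.hom_ext
      intro p
      rw [biproduct.lift_π]
      have hb : b p = u i ≫ biproduct.π (fun _ => L (i + 1)) p := Module.Basis.mk_apply _ _ _
      rw [← hb]
      exact congrArg (fun (x : End (L (i + 1))) => (x : L (i + 1) ⟶ L (i + 1)))
        (Module.Basis.constr_basis b ℕ _ p)
  -- right equivariance
  have hright : ∀ (bb : End (L (i + 1))) ξ,
      eulerPsi (u i) (v i)
          ((LinearMap.toSpanSingleton (End (L (i + 1))) (End (L (i + 1))) bb).comp ξ)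
        = (bb : L (i + 1) ⟶ L (i + 1)) ≫ eulerPsi (u i) (v i) ξ := by
    intro bb ξ
    rw [psi_def, psi_def, ← Category.assoc]
    congr 1
    apply biproduct.hom_ext
    intro p
    simp only [biproduct.lift_π, Category.assoc, LinearMap.comp_apply,
      LinearMap.toSpanSingleton_apply, smul_eq_mul, End.mul_def]
  refine ⟨hadd, ⟨?_, hsurj⟩, hright, ?_⟩
  · intro ξ ζ h
    have h0 : ξ - ζ = 0 := hzero _ (by rw [hsub, h, sub_self])
    exact sub_eq_zero.mp h0
  · obtain ⟨Φe, hΦ⟩ := hPhi i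
    refine ⟨Φe.toRingHom, ?_⟩
    intro c ξ
    obtain ⟨fc, h1, h2⟩ := hΦ c
    rw [psi_def, psi_def, Category.assoc]
    show _ = _ ≫ (v i ≫ (Φe c : L (i + 2) ⟶ L (i + 2)))
    rw [← h2, ← Category.assoc]
    congr 1
    apply biproduct.hom_ext
    intro p
    rw [biproduct.lift_π, Category.assoc]
    have hc : (ξ.comp (precompL c)) (u i ≫ biproduct.π (fun _ => L (i + 1)) p)
        = ξ (u i ≫ (fc ≫ biproduct.π (fun _ => L (i + 1)) p)) := by
      have hpre : (precompL c) (u i ≫ biproduct.π (fun _ => L (i + 1)) p)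
          = u i ≫ (fc ≫ biproduct.π (fun _ => L (i + 1)) p) := by
        show (c : L i ⟶ L i) ≫ (u i ≫ _) = _
        rw [← Category.assoc, h1, Category.assoc]
      rw [LinearMap.comp_apply, hpre]
    rw [hc]
    let m : Fin (l i) → End (L (i + 1)) := fun q =>
      biproduct.ι (fun _ => L (i + 1)) q ≫ fc ≫ biproduct.π (fun _ => L (i + 1)) p
    have hfcp : fc ≫ biproduct.π (fun _ => L (i + 1)) p
        = ∑ q : Fin (l i), biproduct.π (fun _ => L (i + 1)) q ≫ (m q : _) := by
      conv_lhs => rw [← Category.id_comp fc, ← biproduct.total]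
      rw [Preadditive.sum_comp, Preadditive.sum_comp]
      exact Finset.sum_congr rfl (fun q _ => by simp [m, Category.assoc])
    have lhs_eq : ξ (u i ≫ (fc ≫ biproduct.π (fun _ => L (i + 1)) p))
        = ∑ q : Fin (l i), m q • ξ (u i ≫ biproduct.π (fun _ => L (i + 1)) q) := by
      rw [hfcp, Preadditive.comp_sum]
      have harg : ∀ q : Fin (l i), u i ≫ (biproduct.π (fun _ => L (i + 1)) q ≫ (m q : _))
          = m q • (u i ≫ biproduct.π (fun _ => L (i + 1)) q) := by
        intro q
        rw [End.smul_right, Category.assoc]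
      rw [Finset.sum_congr rfl (fun q _ => harg q), map_sum]
      exact Finset.sum_congr rfl (fun q _ => map_smul ξ _ _)
    rw [lhs_eq]
    have rhs_eq : (biproduct.lift (fun q =>
        (ξ (u i ≫ biproduct.π (fun _ => L (i + 1)) q) : L (i + 1) ⟶ L (i + 1)))) ≫
          (fc ≫ biproduct.π (fun _ => L (i + 1)) p)
        = ∑ q : Fin (l i),
            (ξ (u i ≫ biproduct.π (fun _ => L (i + 1)) q) : L (i + 1) ⟶ L (i + 1)) ≫
              (m q : _) := by
      rw [hfcp, Preadditive.comp_sum]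
      exact Finset.sum_congr rfl (fun q _ => by
        rw [← Category.assoc, biproduct.lift_π])
    rw [rhs_eq]
    rfl
end
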